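/- Let n, m be nonnegative integers and a ∉ ℤ. Then the terminating series satisfies 2F1(-n, a; m+1; z) = (m!·(a)_n/(m+n)!) · (-z)^{-m}(1-z)^{m+n} · 2F1(-m-n, 1-a; 1-n-a; 1/(1-z)), as an identity of functions of z on a suitable domain. -/

import Mathlib

open Finset

noncomputable def poch (x : ℂ) (k : ℕ) : ℂ := (ascPochhammer ℂ k).eval x

/-- Terminating Gauss hypergeometric series `2F1(-n, b; c; z)` as a finite sum. -/
noncomputable def hyp (n : ℕ) (b c : ℂ) (z : ℂ) : ℂ :=
  ∑ k ∈ Finset.range (n + 1),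
    poch (-(n : ℂ)) k * poch b k / (poch c k * (Nat.factorial k : ℂ)) * z ^ k

lemma poch_zero (x : ℂ) : poch x 0 = 1 := by simp [poch]

lemma poch_succ (x : ℂ) (k : ℕ) : poch x (k + 1) = poch x k * (x + k) :=
  ascPochhammer_succ_eval k x

lemma poch_succ_left (x : ℂ) (k : ℕ) : poch x (k + 1) = x * poch (x + 1) k := by
  unfold poch
  rw [ascPochhammer_succ_left]
  simp [Polynomial.eval_mul, Polynomial.eval_comp]

lemma poch_add (x : ℂ) (p q : ℕ) : poch x p * poch (x + p) q = poch x (p + q) := by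
  have := congrArg (Polynomial.eval x) (ascPochhammer_mul (S := ℂ) p q)
  simpa [poch, Polynomial.eval_comp] using this

lemma poch_neg_nat_eq_zero {N k : ℕ} (h : N < k) : poch (-(N : ℂ)) k = 0 := by
  have h1 : poch (-(N : ℂ)) (N + 1) = 0 := by
    rw [poch_succ]; simp
  obtain ⟨d, rfl⟩ : ∃ d, k = (N + 1) + d := ⟨k - (N + 1), by omega⟩
  rw [← poch_add, h1, zero_mul]

lemma poch_neg_fact (k d : ℕ) :
    poch (-((k + d : ℕ) : ℂ)) k * (Nat.factorial d : ℂ) =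
      (-1) ^ k * (Nat.factorial (k + d) : ℂ) := by
  induction k generalizing d with
  | zero => simp [poch_zero]
  | succ k ih =>
    have h1 : (-(((k + 1 + d : ℕ)) : ℂ)) = -((k + (d + 1) : ℕ) : ℂ) := by push_cast; ring
    have h2 : (-(((k + 1 + d : ℕ)) : ℂ) + k) = -((d + 1 : ℕ) : ℂ) := by push_cast; ring
    have h3 := ih (d + 1)
    rw [poch_succ, h2, h1]
    have h4 : (Nat.factorial (d + 1) : ℂ) = (d + 1) * Nat.factorial d := by
      rw [Nat.factorial_succ]; push_cast; ring
    have h5 : (Nat.factorial (k + 1 + d) : ℂ) = Nat.factorial (k + (d + 1)) := by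
      norm_num [show k + 1 + d = k + (d + 1) by omega]
    have hd1 : ((d + 1 : ℕ) : ℂ) ≠ 0 := Nat.cast_ne_zero.mpr (by omega)
    apply mul_left_cancel₀ hd1
    rw [h4] at h3
    rw [h5]
    push_cast at h3 ⊢
    linear_combination (-1 : ℂ) * (↑d + 1) * h3

lemma poch_neg_nat_eq (N k : ℕ) (h : k ≤ N) :
    poch (-(N : ℂ)) k = (-1) ^ k * (N.choose k : ℂ) * (Nat.factorial k : ℂ) := by
  obtain ⟨d, rfl⟩ : ∃ d, N = k + d := ⟨N - k, by omega⟩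
  have h1 := poch_neg_fact k d
  have h2 : (k + d).choose k * (Nat.factorial k * Nat.factorial d) = Nat.factorial (k + d) := by
    have := Nat.choose_mul_factorial_mul_factorial (show k ≤ k + d by omega)
    simpa [show k + d - k = d by omega, mul_assoc] using this
  have hfd : (Nat.factorial d : ℂ) ≠ 0 := by exact_mod_cast Nat.factorial_ne_zero d
  apply mul_right_cancel₀ hfd
  rw [h1, ← h2]
  push_cast
  ring

lemma poch_fact_nat (m : ℕ) : ∀ i : ℕ,
    (Nat.factorial m : ℂ) * poch ((m : ℂ) + 1) i = (Nat.factorial (m + i) : ℂ)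
  | 0 => by simp [poch_zero]
  | i + 1 => by
    rw [poch_succ, ← mul_assoc, poch_fact_nat m i, show m + (i + 1) = (m + i) + 1 by omega,
      Nat.factorial_succ]
    push_cast
    ring

lemma poch_reflect (x : ℂ) : ∀ K : ℕ, poch (1 - x - K) K = (-1) ^ K * poch x K
  | 0 => by simp [poch_zero]
  | K + 1 => by
    have h1 : (1 - x - ((K + 1 : ℕ) : ℂ)) = 1 - (x + 1) - K := by push_cast; ring
    have h2 : (1 - x - ((K + 1 : ℕ) : ℂ) + K) = -x := by push_cast; ring
    rw [poch_succ, h2, h1, poch_reflect (x + 1) K, poch_succ_left]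
    ring

lemma poch_ne_zero (x : ℂ) (hx : ∀ j : ℤ, x + j ≠ 0) : ∀ k, poch x k ≠ 0
  | 0 => by simp [poch_zero]
  | k + 1 => by
    rw [poch_succ]
    exact mul_ne_zero (poch_ne_zero x hx k) (by simpa using hx k)

lemma sum_range_split (f : ℕ → ℂ) (p q : ℕ) :
    ∑ j ∈ range (p + q), f j = ∑ j ∈ range p, f j + ∑ i ∈ range q, f (p + i) := by
  induction q with
  | zero => simp
  | succ q ih =>
    rw [show p + (q + 1) = (p + q) + 1 by omega, sum_range_succ, ih, sum_range_succ, add_assoc]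

noncomputable def chuF (N : ℕ) (b c : ℂ) : ℂ :=
  ∑ k ∈ range (N + 1), (-1) ^ k * (N.choose k : ℂ) * poch b k * poch (c + k) (N - k)

lemma chuF_eq : ∀ (N : ℕ) (b c : ℂ), chuF N b c = poch (c - b) N
  | 0, b, c => by simp [chuF, poch_zero]
  | N + 1, b, c => by
    have key : chuF (N + 1) b c = (c + N) * chuF N b c - b * chuF N (b + 1) (c + 1) := by
      rw [chuF, sum_range_succ']
      have e0 : ((-1 : ℂ)) ^ 0 * ((N + 1).choose 0 : ℂ) * poch b 0 * poch (c + ((0 : ℕ) : ℂ)) (N + 1 - 0)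
          = poch c (N + 1) := by simp [poch_zero]
      rw [e0]
      have split : ∀ k ∈ range (N + 1),
          (-1 : ℂ) ^ (k + 1) * ((N + 1).choose (k + 1) : ℂ) * poch b (k + 1) *
              poch (c + (k + 1 : ℕ)) (N + 1 - (k + 1)) =
            (-1) ^ (k + 1) * (N.choose k : ℂ) * poch b (k + 1) * poch (c + (k + 1 : ℕ)) (N - k) +
            (-1) ^ (k + 1) * (N.choose (k + 1) : ℂ) * poch b (k + 1) *
              poch (c + (k + 1 : ℕ)) (N - k) := by
        intro k _
        rw [Nat.choose_succ_succ]
        push_cast [Nat.succ_eq_add_one]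
        ring
      rw [sum_congr rfl split, sum_add_distrib]
      -- first sum = - b * chuF N (b+1) (c+1)
      have S1 : ∑ k ∈ range (N + 1),
          (-1 : ℂ) ^ (k + 1) * (N.choose k : ℂ) * poch b (k + 1) * poch (c + (k + 1 : ℕ)) (N - k)
          = -(b * chuF N (b + 1) (c + 1)) := by
        rw [chuF, mul_sum, ← Finset.sum_neg_distrib]
        refine sum_congr rfl fun k hk => ?_
        rw [poch_succ_left]
        have : (c + ((k : ℕ) + 1 : ℕ) : ℂ) = (c + 1) + (k : ℕ) := by push_cast; ring
        rw [this]
        ring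
      -- second sum + poch c (N+1) = (c+N) * chuF N b c
      have S2 : poch c (N + 1) + ∑ k ∈ range (N + 1),
          (-1 : ℂ) ^ (k + 1) * (N.choose (k + 1) : ℂ) * poch b (k + 1) *
            poch (c + (k + 1 : ℕ)) (N - k)
          = (c + N) * chuF N b c := by
        conv_rhs => rw [chuF, mul_sum, sum_range_succ']
        have e0' : (c + N) * ((-1 : ℂ) ^ 0 * ((N).choose 0 : ℂ) * poch b 0 * poch (c + ((0 : ℕ) : ℂ)) (N - 0))
            = poch c (N + 1) := by
          simp only [pow_zero, Nat.choose_zero_right, Nat.cast_one, poch_zero, Nat.cast_zero,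
            add_zero, Nat.sub_zero, one_mul, mul_one]
          rw [poch_succ]; ring
        rw [e0']
        -- last term of LHS sum (k = N) is zero since N.choose (N+1) = 0
        conv_lhs => rw [sum_range_succ]
        have hlast : (-1 : ℂ) ^ (N + 1) * (N.choose (N + 1) : ℂ) * poch b (N + 1) *
            poch (c + (N + 1 : ℕ)) (N - N) = 0 := by
          simp [Nat.choose_succ_self]
        rw [hlast, add_zero, add_comm]
        congr 1
        refine sum_congr rfl fun k hk => ?_
        simp only [mem_range] at hk
        have h1 : N - k = (N - (k + 1)) + 1 := by omega
        have h2 : (c + ((k : ℕ) + 1 : ℕ) + ((N - (k + 1) : ℕ) : ℂ)) = c + N := by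
          have : ((N - (k + 1) : ℕ) : ℂ) = (N : ℂ) - k - 1 := by
            push_cast [Nat.cast_sub (by omega : k + 1 ≤ N)]; ring
          rw [this]; push_cast; ring
        rw [h1, poch_succ (c + ((k + 1 : ℕ) : ℂ)) (N - (k + 1)), h2]
        push_cast
        ring
      linear_combination S1 + S2
    rw [key, chuF_eq N b c, chuF_eq N (b + 1) (c + 1)]
    have : (c + 1) - (b + 1) = c - b := by ring
    rw [this, poch_succ]
    ring

lemma chu_sum (N : ℕ) (b c : ℂ) (hc : ∀ k, poch c k ≠ 0) :
    ∑ k ∈ range (N + 1), poch (-(N : ℂ)) k * poch b k / (poch c k * (Nat.factorial k : ℂ))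
      = poch (c - b) N / poch c N := by
  rw [← chuF_eq, chuF, sum_div]
  refine sum_congr rfl fun k hk => ?_
  simp only [mem_range] at hk
  have hk' : k ≤ N := by omega
  rw [poch_neg_nat_eq N k hk']
  have hf : (Nat.factorial k : ℂ) ≠ 0 := Nat.cast_ne_zero.mpr (Nat.factorial_ne_zero k)
  have hck : poch c k ≠ 0 := hc k
  have hsplit : poch c k * poch (c + k) (N - k) = poch c N := by
    rw [poch_add, show k + (N - k) = N by omega]
  have hcN : poch c N ≠ 0 := hc N
  have hck2 : poch (c + k) (N - k) ≠ 0 := by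
    intro h; apply hcN; rw [← hsplit, h, mul_zero]
  field_simp
  rw [← hsplit]
  ring

lemma choose_swap {M j k : ℕ} (hj : j ≤ M) (hk : k ≤ M) (hkj : k ≤ M - j) :
    M.choose k * (M - k).choose j = M.choose j * (M - j).choose k := by
  have hjk : j ≤ M - k := by omega
  have e1 := Nat.choose_mul_factorial_mul_factorial hk
  have e2 := Nat.choose_mul_factorial_mul_factorial hjk
  have e3 := Nat.choose_mul_factorial_mul_factorial hj
  have e4 := Nat.choose_mul_factorial_mul_factorial hkj
  have h5 : M - k - j = M - j - k := by omega
  apply Nat.eq_of_mul_eq_mul_right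
    (show 0 < Nat.factorial k * Nat.factorial j * Nat.factorial (M - k - j) by positivity)
  have L : M.choose k * (M - k).choose j *
      (Nat.factorial k * Nat.factorial j * Nat.factorial (M - k - j)) = Nat.factorial M := by
    calc M.choose k * (M - k).choose j *
        (Nat.factorial k * Nat.factorial j * Nat.factorial (M - k - j))
        = ((M - k).choose j * Nat.factorial j * Nat.factorial (M - k - j)) *
            (M.choose k * Nat.factorial k) := by ring
      _ = Nat.factorial (M - k) * (M.choose k * Nat.factorial k) := by rw [e2]
      _ = M.choose k * Nat.factorial k * Nat.factorial (M - k) := by ring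
      _ = Nat.factorial M := e1
  have R : M.choose j * (M - j).choose k *
      (Nat.factorial k * Nat.factorial j * Nat.factorial (M - k - j)) = Nat.factorial M := by
    calc M.choose j * (M - j).choose k *
        (Nat.factorial k * Nat.factorial j * Nat.factorial (M - k - j))
        = ((M - j).choose k * Nat.factorial k * Nat.factorial (M - j - k)) *
            (M.choose j * Nat.factorial j) := by rw [h5]; ring
      _ = Nat.factorial (M - j) * (M.choose j * Nat.factorial j) := by rw [e4]
      _ = M.choose j * Nat.factorial j * Nat.factorial (M - j) := by ring
      _ = Nat.factorial M := e3
  rw [L, R]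

lemma star (M j k : ℕ) (hj : j ≤ M) (hk : k ≤ M) :
    poch (-(M : ℂ)) k * (((M - k).choose j : ℕ) : ℂ)
      = ((M.choose j : ℕ) : ℂ) * poch (-((M - j : ℕ) : ℂ)) k := by
  by_cases hkj : k ≤ M - j
  · rw [poch_neg_nat_eq M k hk, poch_neg_nat_eq (M - j) k hkj]
    have := choose_swap hj hk hkj
    have hc : ((M.choose k * (M - k).choose j : ℕ) : ℂ)
        = ((M.choose j * (M - j).choose k : ℕ) : ℂ) := by exact_mod_cast this
    push_cast at hc
    linear_combination ((-1 : ℂ)) ^ k * (Nat.factorial k : ℂ) * hc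
  · have h1 : M - k < j := by omega
    have h2 : M - j < k := by omega
    rw [Nat.choose_eq_zero_of_lt h1, poch_neg_nat_eq_zero h2]
    simp

lemma key_inner (M j : ℕ) (b c : ℂ) (hj : j ≤ M) (hc : ∀ k, poch c k ≠ 0) :
    ∑ k ∈ range (M + 1),
        poch (-(M : ℂ)) k * poch b k / (poch c k * (Nat.factorial k : ℂ)) *
          (((M - k).choose j : ℕ) : ℂ)
      = ((M.choose j : ℕ) : ℂ) * (poch (c - b) (M - j) / poch c (M - j)) := by
  have step : ∀ k ∈ range (M + 1),
      poch (-(M : ℂ)) k * poch b k / (poch c k * (Nat.factorial k : ℂ)) *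
          (((M - k).choose j : ℕ) : ℂ)
        = ((M.choose j : ℕ) : ℂ) *
            (poch (-((M - j : ℕ) : ℂ)) k * poch b k / (poch c k * (Nat.factorial k : ℂ))) := by
    intro k hk
    simp only [mem_range] at hk
    have hk' : k ≤ M := by omega
    have hD : poch c k * (Nat.factorial k : ℂ) ≠ 0 :=
      mul_ne_zero (hc k) (Nat.cast_ne_zero.mpr (Nat.factorial_ne_zero k))
    have hs := star M j k hj hk'
    set P := poch (-((M - j : ℕ) : ℂ)) k with hP
    rw [div_mul_eq_mul_div, mul_div_assoc', div_left_inj' hD]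
    linear_combination poch b k * hs
  rw [sum_congr rfl step, ← mul_sum]
  congr 1
  have trunc : ∑ k ∈ range ((M - j) + 1),
      poch (-((M - j : ℕ) : ℂ)) k * poch b k / (poch c k * (Nat.factorial k : ℂ))
      = ∑ k ∈ range (M + 1),
      poch (-((M - j : ℕ) : ℂ)) k * poch b k / (poch c k * (Nat.factorial k : ℂ)) := by
    apply sum_subset (by apply range_subset_range.mpr; omega)
    intro x hx hxs
    simp only [mem_range] at hx hxs
    have : M - j < x := by omega
    rw [poch_neg_nat_eq_zero this]
    simp
  rw [← trunc, chu_sum (M - j) b c hc]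

lemma expand (M : ℕ) (b c z : ℂ) (hz1 : z ≠ 1) (hc : ∀ k, poch c k ≠ 0) :
    (1 - z) ^ M * hyp M b c (1 / (1 - z)) =
      ∑ j ∈ range (M + 1),
        (-z) ^ j * ((M.choose j : ℕ) : ℂ) * (poch (c - b) (M - j) / poch c (M - j)) := by
  have hw : (1 : ℂ) - z ≠ 0 := sub_ne_zero.mpr (Ne.symm hz1)
  rw [hyp, mul_sum]
  have step : ∀ k ∈ range (M + 1),
      (1 - z) ^ M * (poch (-(M : ℂ)) k * poch b k / (poch c k * (Nat.factorial k : ℂ)) *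
          (1 / (1 - z)) ^ k)
        = ∑ j ∈ range (M + 1),
            poch (-(M : ℂ)) k * poch b k / (poch c k * (Nat.factorial k : ℂ)) *
              (((M - k).choose j : ℕ) : ℂ) * (-z) ^ j := by
    intro k hk
    simp only [mem_range] at hk
    have hk' : k ≤ M := by omega
    have hpow : (1 - z) ^ M * (1 / (1 - z)) ^ k = (1 - z) ^ (M - k) := by
      have h1 : (1 - z) ^ M = (1 - z) ^ (M - k) * (1 - z) ^ k := by
        rw [← pow_add]; congr 1; omega
      rw [h1, one_div, inv_pow, mul_assoc, mul_inv_cancel₀ (pow_ne_zero _ hw), mul_one]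
    have hbin : (1 - z) ^ (M - k) =
        ∑ j ∈ range (M + 1), (((M - k).choose j : ℕ) : ℂ) * (-z) ^ j := by
      have h1 : (1 : ℂ) - z = (-z) + 1 := by ring
      rw [h1, add_pow]
      simp only [one_pow, mul_one]
      refine Finset.sum_subset (range_subset_range.mpr (show M - k + 1 ≤ M + 1 by omega)) ?_ |>.trans
        (sum_congr rfl fun j _ => by ring)
      intro x hx hxs
      simp only [mem_range] at hx hxs
      rw [Nat.choose_eq_zero_of_lt (by omega)]
      simp
    calc (1 - z) ^ M * (poch (-(M : ℂ)) k * poch b k / (poch c k * (Nat.factorial k : ℂ)) *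
            (1 / (1 - z)) ^ k)
        = poch (-(M : ℂ)) k * poch b k / (poch c k * (Nat.factorial k : ℂ)) *
            ((1 - z) ^ M * (1 / (1 - z)) ^ k) := by ring
      _ = poch (-(M : ℂ)) k * poch b k / (poch c k * (Nat.factorial k : ℂ)) *
            ∑ j ∈ range (M + 1), (((M - k).choose j : ℕ) : ℂ) * (-z) ^ j := by
          rw [hpow, hbin]
      _ = _ := by
          rw [mul_sum]
          refine sum_congr rfl fun j hj => ?_
          ring
  rw [sum_congr rfl step, sum_comm]
  refine sum_congr rfl fun j hj => ?_
  simp only [mem_range] at hj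
  have hj' : j ≤ M := by omega
  rw [← sum_mul, key_inner M j b c hj' hc]
  ring

theorem terminating_extra_transform_one (n m : ℕ) (a : ℂ) (ha : ∀ j : ℤ, a ≠ (j : ℂ))
    (z : ℂ) (hz0 : z ≠ 0) (hz1 : z ≠ 1) :
    hyp n a ((m : ℂ) + 1) z =
      (Nat.factorial m : ℂ) * poch a n / (Nat.factorial (m + n) : ℂ) *
        ((-z) ^ (-(m : ℤ)) * (1 - z) ^ (m + n)) *
        hyp (m + n) (1 - a) (1 - n - a) (1 / (1 - z)) := by
  have hnz : (-z : ℂ) ≠ 0 := neg_ne_zero.mpr hz0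
  have hca : ∀ k, poch (1 - (n : ℂ) - a) k ≠ 0 := by
    refine poch_ne_zero _ fun j h => ?_
    apply ha (1 - (n : ℤ) + j)
    push_cast
    linear_combination -h
  have haa : ∀ k, poch a k ≠ 0 := by
    refine poch_ne_zero a fun j h => ?_
    apply ha (-j)
    push_cast
    linear_combination h
  have hexp := expand (m + n) (1 - a) (1 - (n : ℂ) - a) z hz1 hca
  rw [show (1 - (n : ℂ) - a) - (1 - a) = -((n : ℕ) : ℂ) from by push_cast; ring] at hexp
  rw [show (Nat.factorial m : ℂ) * poch a n / (Nat.factorial (m + n) : ℂ) *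
        ((-z) ^ (-(m : ℤ)) * (1 - z) ^ (m + n)) *
        hyp (m + n) (1 - a) (1 - n - a) (1 / (1 - z))
      = (Nat.factorial m : ℂ) * poch a n / (Nat.factorial (m + n) : ℂ) * (-z) ^ (-(m : ℤ)) *
        ((1 - z) ^ (m + n) * hyp (m + n) (1 - a) (1 - (n : ℂ) - a) (1 / (1 - z))) from by ring,
    hexp, mul_sum]
  rw [show m + n + 1 = m + (n + 1) by omega, sum_range_split]
  have hzero : ∑ j ∈ range m,
      (Nat.factorial m : ℂ) * poch a n / (Nat.factorial (m + n) : ℂ) * (-z) ^ (-(m : ℤ)) *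
        ((-z) ^ j * (((m + n).choose j : ℕ) : ℂ) *
          (poch (-((n : ℕ) : ℂ)) (m + n - j) / poch (1 - (n : ℂ) - a) (m + n - j))) = 0 := by
    refine sum_eq_zero fun j hj => ?_
    simp only [mem_range] at hj
    rw [poch_neg_nat_eq_zero (show n < m + n - j by omega)]
    simp
  rw [hzero, zero_add, hyp]
  refine sum_congr rfl fun i hi => ?_
  simp only [mem_range] at hi
  have hi' : i ≤ n := by omega
  obtain ⟨d, rfl⟩ : ∃ d, n = i + d := ⟨n - i, by omega⟩
  rw [show m + (i + d) - (m + i) = d by omega]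
  -- nonzero facts
  have hfi : (Nat.factorial i : ℂ) ≠ 0 := Nat.cast_ne_zero.mpr (Nat.factorial_ne_zero i)
  have hfd : (Nat.factorial d : ℂ) ≠ 0 := Nat.cast_ne_zero.mpr (Nat.factorial_ne_zero d)
  have hfm : (Nat.factorial m : ℂ) ≠ 0 := Nat.cast_ne_zero.mpr (Nat.factorial_ne_zero m)
  have hfmi : (Nat.factorial (m + i) : ℂ) ≠ 0 := Nat.cast_ne_zero.mpr (Nat.factorial_ne_zero _)
  have hfmn : (Nat.factorial (m + (i + d)) : ℂ) ≠ 0 := Nat.cast_ne_zero.mpr (Nat.factorial_ne_zero _)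
  have hpm : poch ((m : ℂ) + 1) i ≠ 0 := by
    intro h
    apply hfmi
    rw [← poch_fact_nat m i, h, mul_zero]
  have hpc : poch (1 - ((i + d : ℕ) : ℂ) - a) d ≠ 0 := hca d
  have hpai : poch a i ≠ 0 := haa i
  have hpaid : poch (a + (i : ℂ)) d ≠ 0 := by
    intro h
    apply haa (i + d)
    rw [← poch_add a i d, h, mul_zero]
  -- key ratio
  have f2 : poch (-((i + d : ℕ) : ℂ)) d * (Nat.factorial i : ℂ)
      = (-1) ^ d * (Nat.factorial (i + d) : ℂ) := by
    have := poch_neg_fact d i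
    rw [show d + i = i + d by omega] at this
    exact this
  have f3 : poch (1 - ((i + d : ℕ) : ℂ) - a) d = (-1) ^ d * poch (a + (i : ℂ)) d := by
    have := poch_reflect (a + (i : ℂ)) d
    rw [show (1 : ℂ) - (a + (i : ℂ)) - (d : ℂ) = 1 - ((i + d : ℕ) : ℂ) - a from by
      push_cast; ring] at this
    exact this
  have f4 := poch_add a i d
  have key2 : poch (-((i + d : ℕ) : ℂ)) d / poch (1 - ((i + d : ℕ) : ℂ) - a) d
      = ((Nat.factorial (i + d) : ℂ) * poch a i) / ((Nat.factorial i : ℂ) * poch a (i + d)) := by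
    rw [div_eq_div_iff hpc (mul_ne_zero hfi (haa (i + d)))]
    linear_combination poch a (i + d) * f2 - ((Nat.factorial (i + d) : ℂ)) * poch a i * f3
      - (-1 : ℂ) ^ d * ((Nat.factorial (i + d) : ℂ)) * f4
  rw [key2]
  -- explicit forms
  have e1 : poch (-((i + d : ℕ) : ℂ)) i = (-1) ^ i * (Nat.factorial (i + d) : ℂ) /
      (Nat.factorial d : ℂ) := by
    rw [eq_div_iff hfd]; exact poch_neg_fact i d
  have e5 : poch ((m : ℂ) + 1) i = (Nat.factorial (m + i) : ℂ) / (Nat.factorial m : ℂ) := by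
    rw [eq_div_iff hfm]; linear_combination poch_fact_nat m i
  have e6 : (((m + (i + d)).choose (m + i) : ℕ) : ℂ)
      = (Nat.factorial (m + (i + d)) : ℂ) / ((Nat.factorial (m + i) : ℂ) * (Nat.factorial d : ℂ)) := by
    rw [eq_div_iff (mul_ne_zero hfmi hfd)]
    have hnat := Nat.choose_mul_factorial_mul_factorial (show m + i ≤ m + (i + d) by omega)
    rw [show m + (i + d) - (m + i) = d by omega] at hnat
    have := congrArg (Nat.cast : ℕ → ℂ) hnat
    push_cast at this
    linear_combination this
  rw [e1, e5, e6, zpow_neg, zpow_natCast, pow_add (-z) m i, neg_pow z i, neg_pow z m]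
  have hzm : (z : ℂ) ^ m ≠ 0 := pow_ne_zero _ hz0
  field_simp [hz0, hzm, haa (i + d), hfi, hfd, hfm, hfmi, hfmn]
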